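/- Let σ : ℝ → ℝ be the logistic function σ(t) = (1 + exp(−t))⁻¹, let R_max ≥ 0, and set κ = 1 / deriv σ (2 · R_max). Then for every n ∈ ℕ and all sequences u, v : Fin n → ℝ with |u i| ≤ 2 R_max and |v i| ≤ 2 R_max for all i, one has ∑_{i} (u i − v i)² ≤ κ² · ∑_{i} (σ (u i) − σ (v i))². -/

import Mathlib

open Real

noncomputable def logisticD (t : ℝ) : ℝ := Real.exp (-t) / (1 + Real.exp (-t)) ^ 2

lemma hasDerivAt_logistic (t : ℝ) :
    HasDerivAt (fun t : ℝ => (1 + Real.exp (-t))⁻¹) (logisticD t) t := by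
  have h1 : HasDerivAt (fun t : ℝ => 1 + Real.exp (-t)) (-Real.exp (-t)) t := by
    have := (Real.hasDerivAt_exp (-t)).comp t ((hasDerivAt_id t).neg)
    simpa using (this.const_add 1)
  have hne : (1 + Real.exp (-t)) ≠ 0 := by positivity
  have := h1.inv hne
  simp only [neg_div, neg_neg] at this
  exact this

lemma logisticD_eq (t : ℝ) : logisticD t = ((2 * Real.cosh (t / 2)) ^ 2)⁻¹ := by
  have h2 : 2 * Real.cosh (t / 2) = Real.exp (t / 2) + Real.exp (-(t / 2)) := by
    rw [Real.cosh_eq]; ring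
  have key : (Real.exp (t / 2) + Real.exp (-(t / 2))) ^ 2 * Real.exp (-t)
      = (1 + Real.exp (-t)) ^ 2 := by
    have e1 : Real.exp (t / 2) * Real.exp (t / 2) = Real.exp t := by
      rw [← Real.exp_add]; ring_nf
    have e2 : Real.exp (-(t / 2)) * Real.exp (-(t / 2)) = Real.exp (-t) := by
      rw [← Real.exp_add]; ring_nf
    have e3 : Real.exp (t / 2) * Real.exp (-(t / 2)) = 1 := by
      rw [← Real.exp_add]; simp
    have e4 : Real.exp t * Real.exp (-t) = 1 := by
      rw [← Real.exp_add]; simp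
    have e5 : Real.exp (-t) * Real.exp (-t) = Real.exp (-t - t) := by
      rw [← Real.exp_add]; ring_nf
    nlinarith [e1, e2, e3, e4, e5, Real.exp_pos t, Real.exp_pos (-t)]
  rw [logisticD, h2]
  rw [eq_comm, inv_eq_iff_eq_inv, eq_comm, inv_div]
  rw [div_eq_iff (by positivity)]
  linarith [key]

lemma logisticD_pos (t : ℝ) : 0 < logisticD t := by
  rw [logisticD]; positivity

lemma logisticD_anti {s M : ℝ} (hs : |s| ≤ M) : logisticD M ≤ logisticD s := by
  rw [logisticD_eq, logisticD_eq]
  have hM : 0 ≤ M := le_trans (abs_nonneg s) hs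
  have hc : Real.cosh (s / 2) ≤ Real.cosh (M / 2) := by
    rw [Real.cosh_le_cosh, abs_div, abs_div]
    norm_num [abs_of_nonneg hM]
    linarith
  have h1 : 0 < 2 * Real.cosh (s / 2) := by positivity
  have h2 : 0 < 2 * Real.cosh (M / 2) := by positivity
  apply inv_anti₀ (by positivity)
  nlinarith

/-- Pointwise MVT bound: for `|a|, |b| ≤ M`, `logisticD M * |b - a| ≤ |σ b - σ a|`. -/
lemma logistic_lipschitz_lower {M a b : ℝ} (ha : |a| ≤ M) (hb : |b| ≤ M) (hab : a < b) :
    logisticD M * (b - a) ≤ (1 + Real.exp (-b))⁻¹ - (1 + Real.exp (-a))⁻¹ := by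
  set σ : ℝ → ℝ := fun t => (1 + Real.exp (-t))⁻¹ with hσ
  obtain ⟨c, hc, hceq⟩ := exists_hasDerivAt_eq_slope σ logisticD hab
    (fun x _ => (hasDerivAt_logistic x).continuousAt.continuousWithinAt)
    (fun x _ => hasDerivAt_logistic x)
  have hcM : |c| ≤ M := by
    rw [abs_le] at *
    exact ⟨le_of_lt (lt_of_le_of_lt ha.1 hc.1), le_of_lt (lt_of_lt_of_le hc.2 hb.2)⟩
  have h1 : logisticD M ≤ logisticD c := logisticD_anti hcM
  have h2 : logisticD c * (b - a) = σ b - σ a := by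
    rw [hceq, div_mul_cancel₀ _ (sub_ne_zero.mpr hab.ne')]
  have hba : 0 < b - a := sub_pos.mpr hab
  nlinarith

lemma pointwise_sq {M a b : ℝ} (ha : |a| ≤ M) (hb : |b| ≤ M) :
    logisticD M ^ 2 * (a - b) ^ 2
      ≤ ((1 + Real.exp (-a))⁻¹ - (1 + Real.exp (-b))⁻¹) ^ 2 := by
  have hD := logisticD_pos M
  rcases lt_trichotomy a b with h | h | h
  · have h1 := logistic_lipschitz_lower ha hb h
    have h0 : 0 ≤ logisticD M * (b - a) := mul_nonneg hD.le (by linarith)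
    have := mul_self_le_mul_self h0 h1
    nlinarith [this]
  · simp [h]
  · have h1 := logistic_lipschitz_lower hb ha h
    have h0 : 0 ≤ logisticD M * (a - b) := mul_nonneg hD.le (by linarith)
    have := mul_self_le_mul_self h0 h1
    nlinarith [this]

theorem return_confidence_inverse_bound (Rmax : ℝ) (hR : 0 ≤ Rmax) :
    let σ : ℝ → ℝ := fun t => (1 + Real.exp (-t))⁻¹
    let κ : ℝ := 1 / deriv σ (2 * Rmax)
    ∀ (n : ℕ) (u v : Fin n → ℝ),
      (∀ i, |u i| ≤ 2 * Rmax) → (∀ i, |v i| ≤ 2 * Rmax) →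
      ∑ i, (u i - v i) ^ 2 ≤ κ ^ 2 * ∑ i, (σ (u i) - σ (v i)) ^ 2 := by
  intro σ κ n u v hu hv
  have hd : deriv σ (2 * Rmax) = logisticD (2 * Rmax) :=
    (hasDerivAt_logistic (2 * Rmax)).deriv
  have hD := logisticD_pos (2 * Rmax)
  have hκ : κ = (logisticD (2 * Rmax))⁻¹ := by simp only [κ, hd, one_div]
  rw [Finset.mul_sum]
  apply Finset.sum_le_sum
  intro i _
  have key := pointwise_sq (hu i) (hv i)
  have hκD : κ ^ 2 * logisticD (2 * Rmax) ^ 2 = 1 := by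
    rw [hκ]; field_simp
  calc (u i - v i) ^ 2 = κ ^ 2 * (logisticD (2 * Rmax) ^ 2 * (u i - v i) ^ 2) := by
        rw [← mul_assoc, hκD, one_mul]
    _ ≤ κ ^ 2 * (σ (u i) - σ (v i)) ^ 2 := by
        apply mul_le_mul_of_nonneg_left _ (sq_nonneg κ)
        exact key
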